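/- Let ℓ ≥ 1. For every real s, ∫₀^∞ ψ⁺_ℓ(u) u^{1/2 - i s} (du/u) = π^{-(1/2 - i s)/2} Γ((1/2 - i s)/2) · P⁺_ℓ(s). Moreover P⁺_ℓ, viewed as a polynomial in ℂ[X], is divisible by 1/4 + X² (in particular P⁺_ℓ(i/2) = 0), is even, and has real coefficients. -/

import Mathlib

open MeasureTheory Complex Polynomial

/-- The function `ψ⁺_ℓ`. -/
noncomputable def psiPlus (l : ℕ) (x : ℝ) : ℝ :=
  ∑ k ∈ Finset.Icc 1 (2 * l),
    (-1 : ℝ) ^ k * (2 : ℝ) ^ ((3 * (k : ℝ)) - 2 * l + 1 / 4) *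
      Real.sqrt ((4 * l).factorial) / ((2 * l - k).factorial * (2 * k).factorial) *
      Real.pi ^ k * x ^ (2 * k) * Real.exp (-Real.pi * x ^ 2)

/-- The polynomial `P⁺_ℓ ∈ ℂ[X]`. -/
noncomputable def Pplus (l : ℕ) : Polynomial ℂ :=
  ∑ k ∈ Finset.Icc 1 (2 * l),
    Polynomial.C ((-1 : ℂ) ^ k * (((2 : ℝ) ^ ((3 * (k : ℝ)) - 2 * l - 3 / 4) : ℝ) : ℂ) *
        ((Real.sqrt ((4 * l).factorial) : ℝ) : ℂ) /
        (((2 * l - k).factorial : ℂ) * ((2 * k).factorial : ℂ))) *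
      ∏ j ∈ Finset.range k,
        (Polynomial.C ((j : ℂ) + 1 / 4) - Polynomial.C (Complex.I / 2) * Polynomial.X)

section Aux
open Finset Set

noncomputable def prq (z : ℂ) (k : ℕ) : ℂ := ∏ j ∈ Finset.range k, (z + 1/4 + j)

@[simp] lemma prq_zero (z : ℂ) : prq z 0 = 1 := by simp [prq]

lemma prq_succ (z : ℂ) (k : ℕ) : prq z (k+1) = prq z k * (z + 1/4 + k) := by
  simp [prq, Finset.prod_range_succ]

noncomputable def Tt (z : ℂ) (m k : ℕ) : ℂ :=
  (-1)^k * (m.descFactorial k : ℂ) * 8^k * prq z k * (((2*k).factorial : ℂ))⁻¹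

noncomputable def Wf (z : ℂ) (n : ℕ) (k : ℕ) : ℂ :=
  (-1)^k * (k : ℂ) * (1 - 2*(k:ℂ)) * (n.descFactorial (k-1) : ℂ) * 8^k * prq z k *
    (((2*k).factorial : ℂ))⁻¹

lemma Tt_eq_zero {z : ℂ} {m k : ℕ} (h : m < k) : Tt z m k = 0 := by
  simp [Tt, Nat.descFactorial_of_lt h]

lemma tele (z : ℂ) (m j : ℕ) :
    (2*(m:ℂ)+3) * Tt z (m+2) (j+1) + 4*z*Tt z (m+1) (j+1) - (2*(m:ℂ)+2) * Tt z m (j+1)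
      = Wf z (m+1) (j+2) - Wf z (m+1) (j+1) := by
  have hA : (((m+2).descFactorial (j+1) : ℕ) : ℂ) = ((m:ℂ)+2) * ((m+1).descFactorial j : ℂ) := by
    rw [Nat.succ_descFactorial_succ]; push_cast; ring
  have hB : (((m+1).descFactorial (j+1) : ℕ) : ℂ)
      = ((m:ℂ)+1-(j:ℂ)) * ((m+1).descFactorial j : ℂ) := by
    rcases le_or_gt j (m+1) with h | h
    · rw [Nat.descFactorial_succ, Nat.cast_mul, Nat.cast_sub h]; push_cast; ring
    · rw [Nat.descFactorial_of_lt (by omega), Nat.descFactorial_of_lt h]; simp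
  have hC3 : ((m:ℂ)+1) * ((m.descFactorial (j+1) : ℕ) : ℂ)
      = ((m:ℂ)-(j:ℂ)) * (((m:ℂ)+1-(j:ℂ)) * ((m+1).descFactorial j : ℂ)) := by
    rcases le_or_gt j m with h | h
    · have k1 : (m+1).descFactorial (j+1) = (m+1-j) * (m+1).descFactorial j :=
        Nat.descFactorial_succ _ _
      have k2 : (m+1).descFactorial (j+1) = (m+1) * m.descFactorial j :=
        Nat.succ_descFactorial_succ _ _
      have k3 : m.descFactorial (j+1) = (m-j) * m.descFactorial j := Nat.descFactorial_succ _ _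
      have e1 : (((m+1-j) * (m+1).descFactorial j : ℕ) : ℂ)
          = (((m+1) * m.descFactorial j : ℕ) : ℂ) := by rw [← k1, k2]
      rw [Nat.cast_mul, Nat.cast_sub (by omega)] at e1
      rw [k3, Nat.cast_mul, Nat.cast_sub h]
      push_cast at e1 ⊢
      linear_combination (-(m:ℂ) + j) * e1
    · rcases eq_or_lt_of_le (Nat.succ_le_of_lt h) with h' | h'
      · rw [Nat.descFactorial_of_lt (by omega)]
        rw [← h']; push_cast; ring
      · rw [Nat.descFactorial_of_lt (by omega), Nat.descFactorial_of_lt (by omega)]; simp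
  have hFne : (((2*(j+1)).factorial : ℕ) : ℂ) ≠ 0 :=
    Nat.cast_ne_zero.mpr (Nat.factorial_ne_zero _)
  have hInv : (((2*(j+1)).factorial : ℕ) : ℂ)⁻¹
      = ((2*(j:ℂ)+4)*(2*(j:ℂ)+3)) * (((2*(j+2)).factorial : ℕ) : ℂ)⁻¹ := by
    have hf : ((2*(j+2)).factorial : ℕ) = (2*(j+1)+2) * ((2*(j+1)+1) * (2*(j+1)).factorial) := by
      have : 2*(j+2) = (2*(j+1)+1) + 1 := by ring
      rw [this, Nat.factorial_succ, Nat.factorial_succ]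
    have hne : (((2*(j+2)).factorial : ℕ) : ℂ) ≠ 0 :=
      Nat.cast_ne_zero.mpr (Nat.factorial_ne_zero _)
    field_simp
    rw [hf]; push_cast; ring
  simp only [Tt, Wf, show (j+2)-1 = j+1 from rfl, show (j+1)-1 = j from rfl]
  rw [hA, hB, prq_succ z (j+1), hInv]
  push_cast
  linear_combination (-2 * (-1:ℂ)^(j+1) * 8^(j+1) * prq z (j+1) * ((2*(j:ℂ)+4)*(2*(j:ℂ)+3)) *
    (((2*(j+2)).factorial : ℕ) : ℂ)⁻¹) * hC3

noncomputable def Ss (z : ℂ) (m : ℕ) : ℂ := ∑ k ∈ Finset.range (m+1), Tt z m k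

lemma Ss_eq_sum (z : ℂ) {m N : ℕ} (h : m+1 ≤ N) : (∑ k ∈ Finset.range N, Tt z m k) = Ss z m := by
  rw [Ss]
  symm
  apply Finset.sum_subset (Finset.range_subset_range.mpr h)
  intro k _ hk
  exact Tt_eq_zero (by simp at hk ⊢; omega)

lemma tele0 (z : ℂ) (m : ℕ) :
    (2*(m:ℂ)+3) * Tt z (m+2) 0 + 4*z*Tt z (m+1) 0 - (2*(m:ℂ)+2) * Tt z m 0
      = Wf z (m+1) 1 - Wf z (m+1) 0 := by
  simp [Tt, Wf, prq_succ]
  norm_num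
  ring

lemma Wf_last (z : ℂ) (m : ℕ) : Wf z (m+1) (m+4) = 0 := by
  simp [Wf, Nat.descFactorial_of_lt (show m+1 < (m+4)-1 by omega)]

lemma Ss_rec (z : ℂ) (m : ℕ) :
    (2*(m:ℂ)+3) * Ss z (m+2) + 4*z*Ss z (m+1) - (2*(m:ℂ)+2) * Ss z m = 0 := by
  have h1 : Ss z (m+2) = ∑ k ∈ Finset.range (m+4), Tt z (m+2) k := (Ss_eq_sum z (by omega)).symm
  have h2 : Ss z (m+1) = ∑ k ∈ Finset.range (m+4), Tt z (m+1) k := (Ss_eq_sum z (by omega)).symm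
  have h3 : Ss z m = ∑ k ∈ Finset.range (m+4), Tt z m k := (Ss_eq_sum z (by omega)).symm
  rw [h1, h2, h3, Finset.mul_sum, Finset.mul_sum, Finset.mul_sum, ← Finset.sum_add_distrib,
    ← Finset.sum_sub_distrib]
  have : ∀ k ∈ Finset.range (m+4),
      (2*(m:ℂ)+3) * Tt z (m+2) k + 4*z*Tt z (m+1) k - (2*(m:ℂ)+2) * Tt z m k
        = Wf z (m+1) (k+1) - Wf z (m+1) k := by
    intro k _
    cases k with
    | zero => exact tele0 z m
    | succ j => exact tele z m j
  rw [Finset.sum_congr rfl this, Finset.sum_range_sub (fun k => Wf z (m+1) k) (m+4), Wf_last]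
  simp [Wf]

lemma Ss_zero (z : ℂ) : Ss z 0 = 1 := by simp [Ss, Tt]

lemma Ss_one (z : ℂ) : Ss z 1 = -4*z := by
  rw [Ss]
  rw [Finset.sum_range_succ, Finset.sum_range_one]
  simp [Tt, prq_succ]
  norm_num
  ring

lemma Ss_parity (m : ℕ) (z : ℂ) : Ss (-z) m = (-1)^m * Ss z m := by
  induction m using Nat.twoStepInduction generalizing z with
  | zero => simp [Ss_zero]
  | one => simp [Ss_one]
  | more m ih1 ih2 =>
    have h23 : (2*(m:ℂ)+3) ≠ 0 := by
      intro h
      have : (2*(m:ℂ)+3).re = 0 := by rw [h]; simp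
      simp [Complex.add_re, Complex.mul_re] at this
      norm_num at this
      nlinarith [Nat.cast_nonneg (α := ℝ) m]
    have R1 := Ss_rec (-z) m
    have R2 := Ss_rec z m
    have I1 := ih2 z
    have I2 := ih1 z
    apply mul_left_cancel₀ h23
    linear_combination R1 - (-1:ℂ)^m * R2 + 4*z*I1 + (2*(m:ℂ)+2)*I2

lemma Ss_quarter (m : ℕ) : Ss (1/4 : ℂ) m = (-1)^m := by
  induction m using Nat.twoStepInduction with
  | zero => simp [Ss_zero]
  | one => rw [Ss_one]; norm_num
  | more m ih1 ih2 =>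
    have h23 : (2*(m:ℂ)+3) ≠ 0 := by
      intro h
      have : (2*(m:ℂ)+3).re = 0 := by rw [h]; simp
      simp [Complex.add_re, Complex.mul_re] at this
      norm_num at this
      nlinarith [Nat.cast_nonneg (α := ℝ) m]
    have R := Ss_rec (1/4 : ℂ) m
    apply mul_left_cancel₀ h23
    linear_combination R - ih2 + (2*(m:ℂ)+2)*ih1

noncomputable def Kc (l : ℕ) : ℂ :=
  (((2 : ℝ) ^ (-(2 * (l:ℝ)) - 3 / 4) * Real.sqrt ((4 * l).factorial) : ℝ) : ℂ) /
    ((2 * l).factorial : ℂ)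

lemma eval_Pplus (l : ℕ) (w : ℂ) :
    (Pplus l).eval w = Kc l * (Ss (-(Complex.I * w) / 2) (2 * l) - 1) := by
  set z : ℂ := -(Complex.I * w) / 2 with hz
  have hrange : Finset.range (2*l+1) = insert 0 (Finset.Icc 1 (2*l)) := by
    ext x; simp; omega
  have hS : Ss z (2*l) - 1 = ∑ k ∈ Finset.Icc 1 (2*l), Tt z (2*l) k := by
    rw [Ss, hrange, Finset.sum_insert (by simp)]
    simp [Tt]
  rw [hS, Pplus, Polynomial.eval_finset_sum, Finset.mul_sum]
  apply Finset.sum_congr rfl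
  intro k hk
  simp only [Finset.mem_Icc] at hk
  rw [Polynomial.eval_mul, Polynomial.eval_C, Polynomial.eval_prod]
  have hfac : ∀ j ∈ Finset.range k,
      (Polynomial.C ((j:ℂ) + 1/4) - Polynomial.C (Complex.I/2) * Polynomial.X).eval w
        = z + 1/4 + j := by
    intro j _
    simp [hz]
    ring
  rw [Finset.prod_congr rfl hfac]
  have hprq : (∏ j ∈ Finset.range k, (z + 1/4 + (j:ℂ))) = prq z k := rfl
  rw [hprq, Tt]
  -- now pure scalar identity
  have hdf : ((2*l - k).factorial : ℂ) * ((2*l).descFactorial k : ℂ) = ((2*l).factorial : ℂ) := by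
    rw [← Nat.cast_mul, Nat.factorial_mul_descFactorial hk.2]
  have h2 : ((2:ℝ) ^ ((3 * (k : ℝ)) - 2 * l - 3 / 4) : ℝ)
      = (8:ℝ)^k * (2:ℝ) ^ (-(2 * (l:ℝ)) - 3 / 4) := by
    rw [show (3 * (k : ℝ)) - 2 * l - 3 / 4 = 3*(k:ℝ) + (-(2 * (l:ℝ)) - 3 / 4) by ring,
      Real.rpow_add two_pos]
    congr 1
    rw [show (3:ℝ)*(k:ℝ) = ((3*k : ℕ) : ℝ) by push_cast; ring, Real.rpow_natCast]
    rw [pow_mul]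
    norm_num
  rw [h2, Kc]
  set a : ℝ := (2:ℝ) ^ (-(2 * (l:ℝ)) - 3 / 4) with ha
  set b : ℝ := Real.sqrt ((4 * l).factorial) with hb
  have hne1 : ((2*l - k).factorial : ℂ) ≠ 0 := Nat.cast_ne_zero.mpr (Nat.factorial_ne_zero _)
  have hne2 : ((2*k).factorial : ℂ) ≠ 0 := Nat.cast_ne_zero.mpr (Nat.factorial_ne_zero _)
  have hne3 : (((2*l).factorial : ℕ) : ℂ) ≠ 0 := Nat.cast_ne_zero.mpr (Nat.factorial_ne_zero _)
  have hdd : (((2*l).descFactorial k : ℕ) : ℂ) = ((2*l).factorial : ℂ) / ((2*l - k).factorial : ℂ) := by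
    rw [eq_div_iff hne1]
    linear_combination hdf
  rw [hdd]
  push_cast
  field_simp

lemma Pplus_even (l : ℕ) (w : ℂ) : (Pplus l).eval (-w) = (Pplus l).eval w := by
  rw [eval_Pplus, eval_Pplus]
  have : -(Complex.I * -w) / 2 = -(-(Complex.I * w) / 2) := by ring
  rw [this, Ss_parity]
  have : ((-1:ℂ))^(2*l) = 1 := by rw [pow_mul]; norm_num
  rw [this, one_mul]

lemma Pplus_root (l : ℕ) : (Pplus l).eval (Complex.I / 2) = 0 := by
  rw [eval_Pplus]
  have : -(Complex.I * (Complex.I/2)) / 2 = (1/4 : ℂ) := by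
    rw [show Complex.I * (Complex.I/2) = (Complex.I*Complex.I)/2 by ring, Complex.I_mul_I]
    norm_num
  rw [this, Ss_quarter]
  have : ((-1:ℂ))^(2*l) = 1 := by rw [pow_mul]; norm_num
  rw [this]
  ring

lemma Pplus_dvd (l : ℕ) :
    (Polynomial.C (1/4 : ℂ) + Polynomial.X ^ 2) ∣ Pplus l := by
  have h1 : (Polynomial.X - Polynomial.C (Complex.I/2)) ∣ Pplus l :=
    Polynomial.dvd_iff_isRoot.mpr (Pplus_root l)
  have h2 : (Polynomial.X - Polynomial.C (-(Complex.I/2))) ∣ Pplus l := by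
    apply Polynomial.dvd_iff_isRoot.mpr
    unfold Polynomial.IsRoot
    rw [Pplus_even l (Complex.I/2)]
    exact Pplus_root l
  have hcop : IsCoprime (Polynomial.X - Polynomial.C (Complex.I/2))
      (Polynomial.X - Polynomial.C (-(Complex.I/2))) := by
    apply Polynomial.isCoprime_X_sub_C_of_isUnit_sub
    rw [show Complex.I/2 - -(Complex.I/2) = Complex.I by ring]
    exact Ne.isUnit Complex.I_ne_zero
  have hmul := hcop.mul_dvd h1 h2
  have hX : (Polynomial.X - Polynomial.C (Complex.I/2)) *
      (Polynomial.X - Polynomial.C (-(Complex.I/2)))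
        = Polynomial.C (1/4 : ℂ) + Polynomial.X ^ 2 := by
    have hC : Polynomial.C (1/4 : ℂ) = - (Polynomial.C (Complex.I/2))^2 := by
      rw [← Polynomial.C_pow, show (Complex.I/2)^2 = Complex.I*Complex.I/4 by ring,
        Complex.I_mul_I]
      rw [show (-1:ℂ)/4 = -(1/4) by ring, Polynomial.C_neg, neg_neg]
    rw [hC, show Polynomial.C (-(Complex.I/2)) = -Polynomial.C (Complex.I/2) from map_neg _ _]
    ring
  rwa [hX] at hmul

lemma Pplus_conj (l : ℕ) : (Pplus l).map (starRingEnd ℂ) = Pplus l := by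
  have hcomp : (Pplus l).comp (-Polynomial.X) = Pplus l := by
    apply Polynomial.funext
    intro x
    rw [Polynomial.eval_comp]
    simp only [Polynomial.eval_neg, Polynomial.eval_X]
    exact Pplus_even l x
  have hmap : (Pplus l).map (starRingEnd ℂ) = (Pplus l).comp (-Polynomial.X) := by
    unfold Pplus
    rw [Polynomial.map_sum, Polynomial.sum_comp]
    apply Finset.sum_congr rfl
    intro k _
    rw [Polynomial.map_mul, Polynomial.mul_comp, Polynomial.map_C, Polynomial.C_comp,
      Polynomial.map_prod, Polynomial.prod_comp]
    congr 1
    · congr 1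
      simp only [map_div₀, map_mul, map_pow, map_neg, map_one, Complex.conj_ofReal,
        map_natCast]
    · apply Finset.prod_congr rfl
      intro j _
      rw [Polynomial.map_sub, Polynomial.map_mul, Polynomial.map_C, Polynomial.map_C,
        Polynomial.map_X, Polynomial.sub_comp, Polynomial.mul_comp, Polynomial.C_comp,
        Polynomial.C_comp, Polynomial.X_comp]
      simp only [map_add, Complex.conj_natCast, map_div₀, map_one, map_ofNat,
        Complex.conj_I]
      rw [show (-Complex.I / 2 : ℂ) = -(Complex.I / 2) by ring, map_neg]
      ring
  rw [hmap, hcomp]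


lemma integral_cpow_exp (c : ℂ) (hc : 0 < c.re) :
    (∫ u in Set.Ioi (0:ℝ), (u:ℂ)^(c-1) * Complex.exp (-(Real.pi:ℂ) * (u:ℂ)^2))
      = (Real.pi:ℂ)^(-c/2) * Complex.Gamma (c/2) / 2 := by
  have hc2 : 0 < (c/2).re := by
    rw [show (2:ℂ) = ((2:ℝ):ℂ) by norm_num, Complex.div_ofReal_re]
    positivity
  have h1 : (∫ u in Set.Ioi (0:ℝ), (u:ℂ)^(c-1) * Complex.exp (-(Real.pi:ℂ) * (u:ℂ)^2))
      = mellin (fun t : ℝ => ((Real.exp (-Real.pi * t^2) : ℝ) : ℂ)) c := by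
    rw [mellin]
    apply setIntegral_congr_fun measurableSet_Ioi
    intro t _
    dsimp only
    rw [smul_eq_mul, Complex.ofReal_exp]
    push_cast
    ring_nf
  have h4 := mellin_comp_rpow (E := ℂ) (fun u : ℝ => ((Real.exp (-Real.pi * u) : ℝ) : ℂ)) c 2
  have h2 : (fun t : ℝ => ((Real.exp (-Real.pi * (t ^ (2:ℝ))) : ℝ) : ℂ))
      = fun t : ℝ => ((Real.exp (-Real.pi * t^2) : ℝ) : ℂ) := by
    funext t
    rw [show (2:ℝ) = ((2:ℕ):ℝ) by norm_num, Real.rpow_natCast]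
  rw [h2] at h4
  have h5 := mellin_comp_mul_left (E := ℂ) (fun v : ℝ => ((Real.exp (-v) : ℝ) : ℂ)) (c/2)
    Real.pi_pos
  simp only [← neg_mul] at h5
  have h6 : mellin (fun v : ℝ => ((Real.exp (-v) : ℝ) : ℂ)) (c/2) = Complex.Gamma (c/2) := by
    rw [Complex.Gamma_eq_integral hc2, Complex.GammaIntegral_eq_mellin]
  rw [h6] at h5
  rw [show ((2:ℝ):ℂ) = (2:ℂ) by norm_num] at h4
  rw [h1, h4, h5]
  simp only [smul_eq_mul]
  norm_num
  rw [show -(c/2) = -c/2 by ring]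
  ring
lemma integrable_cpow_exp (c : ℂ) (hc : 0 < c.re) :
    IntegrableOn (fun u : ℝ => (u:ℂ)^(c-1) * Complex.exp (-(Real.pi:ℂ) * (u:ℂ)^2))
      (Set.Ioi (0:ℝ)) := by
  have hmaj : IntegrableOn (fun u : ℝ => u ^ (c.re - 1) * Real.exp (-Real.pi * u^2))
      (Set.Ioi (0:ℝ)) := integrableOn_rpow_mul_exp_neg_mul_sq Real.pi_pos (by linarith)
  apply Integrable.mono' hmaj
  · apply ContinuousOn.aestronglyMeasurable _ measurableSet_Ioi
    apply ContinuousOn.mul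
    · intro x hx
      exact (Complex.continuousAt_ofReal_cpow_const x (c-1) (Or.inr (ne_of_gt hx))).continuousWithinAt
    · apply Continuous.continuousOn
      exact Complex.continuous_exp.comp (by continuity)
  · filter_upwards [ae_restrict_mem measurableSet_Ioi] with u hu
    have hu0 : (0:ℝ) < u := hu
    rw [norm_mul,
      Complex.norm_cpow_eq_rpow_re_of_pos hu0, Complex.norm_exp]
    have hcast : (-(Real.pi:ℂ) * (u:ℂ)^2) = ((-Real.pi * u^2 : ℝ) : ℂ) := by push_cast; ring
    rw [hcast, Complex.ofReal_re, Complex.sub_re, Complex.one_re]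

lemma Gamma_prq (t : ℂ) (ht : 0 < t.re) : ∀ k : ℕ,
    Complex.Gamma (t + k) = Complex.Gamma t * prq (t - 1/4) k
  | 0 => by simp
  | (k+1) => by
      have hne : (t + (k:ℂ)) ≠ 0 := by
        intro h
        have h0 : (t + (k:ℂ)).re = 0 := by rw [h]; simp
        rw [Complex.add_re, Complex.natCast_re] at h0
        have := Nat.cast_nonneg (α := ℝ) k
        linarith
      have h1 : t + ((k+1 : ℕ) : ℂ) = (t + k) + 1 := by push_cast; ring
      rw [h1, Complex.Gamma_add_one _ hne, Gamma_prq t ht k, prq_succ]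
      ring

noncomputable def Ckc (l k : ℕ) : ℂ :=
  (-1 : ℂ) ^ k * (((2 : ℝ) ^ ((3 * (k : ℝ)) - 2 * l - 3 / 4) : ℝ) : ℂ) *
    ((Real.sqrt ((4 * l).factorial) : ℝ) : ℂ) /
    (((2 * l - k).factorial : ℂ) * ((2 * k).factorial : ℂ))

lemma eval_Pplus_sum (l : ℕ) (v : ℂ) :
    (Pplus l).eval v = ∑ k ∈ Finset.Icc 1 (2*l), Ckc l k * prq (-(Complex.I*v)/2) k := by
  rw [Pplus, Polynomial.eval_finset_sum]
  apply Finset.sum_congr rfl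
  intro k _
  rw [Polynomial.eval_mul, Polynomial.eval_C, Polynomial.eval_prod]
  have hfac : ∀ j ∈ Finset.range k,
      (Polynomial.C ((j:ℂ) + 1/4) - Polynomial.C (Complex.I/2) * Polynomial.X).eval v
        = -(Complex.I*v)/2 + 1/4 + j := by
    intro j _
    simp
    ring
  rw [Finset.prod_congr rfl hfac, Ckc]
  rfl

lemma main_integral (l : ℕ) (s : ℝ) :
    (∫ u in Set.Ioi (0:ℝ),
        ((psiPlus l u : ℝ) : ℂ) * (u:ℂ) ^ ((1:ℂ)/2 - Complex.I*(s:ℂ)) / (u:ℂ))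
      = (Real.pi:ℂ) ^ (-((1:ℂ)/2 - Complex.I*(s:ℂ))/2) *
          Complex.Gamma (((1:ℂ)/2 - Complex.I*(s:ℂ))/2) * (Pplus l).eval (s:ℂ) := by
  set w : ℂ := (1:ℂ)/2 - Complex.I*(s:ℂ) with hwdef
  have hw : w.re = 1/2 := by
    rw [hwdef]
    simp [Complex.div_re, Complex.mul_re]
  have hπ : (Real.pi : ℂ) ≠ 0 := Complex.ofReal_ne_zero.mpr Real.pi_ne_zero
  have h14 : 0 < (w/2).re := by
    rw [show (2:ℂ) = ((2:ℝ):ℂ) by norm_num, Complex.div_ofReal_re, hw]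
    norm_num
  have hre : ∀ k : ℕ, 0 < (w + 2*(k:ℂ)).re := by
    intro k
    have h2k : (2*(k:ℂ)).re = 2*(k:ℝ) := by
      simp [Complex.mul_re]
    rw [Complex.add_re, hw, h2k]
    have := Nat.cast_nonneg (α := ℝ) k
    linarith
  have hInt : ∀ u ∈ Set.Ioi (0:ℝ),
      ((psiPlus l u : ℝ) : ℂ) * (u:ℂ) ^ w / (u:ℂ)
        = ∑ k ∈ Finset.Icc 1 (2*l),
            (((-1:ℝ)^k * (2:ℝ)^((3*(k:ℝ)) - 2*l + 1/4) * Real.sqrt ((4*l).factorial) /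
              ((2*l-k).factorial * (2*k).factorial) * Real.pi^k : ℝ) : ℂ) *
            ((u:ℂ) ^ (w + 2*(k:ℂ) - 1) * Complex.exp (-(Real.pi:ℂ) * (u:ℂ)^2)) := by
    intro u hu
    have hu0 : (0:ℝ) < u := hu
    have hune : (u:ℂ) ≠ 0 := by
      simpa using ne_of_gt hu0
    rw [psiPlus]
    push_cast
    rw [Finset.sum_mul, Finset.sum_div]
    apply Finset.sum_congr rfl
    intro k _
    have hcp : (u:ℂ) ^ (w + 2*(k:ℂ) - 1) = (u:ℂ)^w * (u:ℂ)^(2*k : ℕ) / (u:ℂ) := by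
      rw [show w + 2*(k:ℂ) - 1 = w + ((2*k : ℕ) : ℂ) + (-1) by push_cast; ring,
        Complex.cpow_add _ _ hune, Complex.cpow_add _ _ hune, Complex.cpow_natCast,
        Complex.cpow_neg_one]
      ring
    rw [hcp]
    have hexp : Complex.exp (-(Real.pi:ℂ) * (u:ℂ)^2) = ((Real.exp (-Real.pi * u^2) : ℝ) : ℂ) := by
      rw [Complex.ofReal_exp]
      push_cast
      ring_nf
    rw [hexp]
    push_cast
    ring
  rw [setIntegral_congr_fun measurableSet_Ioi hInt]
  rw [MeasureTheory.integral_finset_sum _ (fun k _ => by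
    exact ((integrable_cpow_exp (w + 2*(k:ℂ)) (hre k)).const_mul _))]
  have hval : ∀ k ∈ Finset.Icc 1 (2*l),
      (∫ u in Set.Ioi (0:ℝ),
          (((-1:ℝ)^k * (2:ℝ)^((3*(k:ℝ)) - 2*l + 1/4) * Real.sqrt ((4*l).factorial) /
            ((2*l-k).factorial * (2*k).factorial) * Real.pi^k : ℝ) : ℂ) *
          ((u:ℂ) ^ (w + 2*(k:ℂ) - 1) * Complex.exp (-(Real.pi:ℂ) * (u:ℂ)^2)))
        = (Real.pi:ℂ) ^ (-((1:ℂ)/2 - Complex.I*(s:ℂ))/2) * Complex.Gamma (w/2) *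
            (Ckc l k * prq (-(Complex.I*(s:ℂ))/2) k) := by
    intro k _
    rw [MeasureTheory.integral_const_mul]
    rw [show w + 2*(k:ℂ) - 1 = (w + 2*(k:ℂ)) - 1 by ring]
    rw [integral_cpow_exp (w + 2*(k:ℂ)) (hre k)]
    have hG : Complex.Gamma ((w + 2*(k:ℂ))/2) = Complex.Gamma (w/2) *
        prq (-(Complex.I*(s:ℂ))/2) k := by
      rw [show (w + 2*(k:ℂ))/2 = w/2 + (k:ℂ) by ring]
      rw [Gamma_prq (w/2) h14 k, show w/2 - 1/4 = -(Complex.I*(s:ℂ))/2 by rw [hwdef]; ring]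
    have hp : (Real.pi:ℂ)^(-(w + 2*(k:ℂ))/2)
        = (Real.pi:ℂ)^(-((1:ℂ)/2 - Complex.I*(s:ℂ))/2) * ((Real.pi:ℂ)^k)⁻¹ := by
      rw [show -(w + 2*(k:ℂ))/2 = -w/2 + (-(k:ℂ)) by push_cast; ring,
        Complex.cpow_add _ _ hπ, Complex.cpow_neg, Complex.cpow_natCast, hwdef]
    rw [hG, hp, Ckc]
    have hr : ((2:ℝ)^((3*(k:ℝ)) - 2*l + 1/4) : ℝ)
        = (2:ℝ)^((3*(k:ℝ)) - 2*l - 3/4) * 2 := by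
      rw [show (3*(k:ℝ)) - 2*l + 1/4 = ((3*(k:ℝ)) - 2*l - 3/4) + 1 by ring,
        Real.rpow_add_one two_ne_zero]
    rw [hr]
    have hπk : ((Real.pi:ℂ))^k ≠ 0 := pow_ne_zero _ hπ
    have hne1 : ((2*l - k).factorial : ℂ) ≠ 0 := Nat.cast_ne_zero.mpr (Nat.factorial_ne_zero _)
    have hne2 : ((2*k).factorial : ℂ) ≠ 0 := Nat.cast_ne_zero.mpr (Nat.factorial_ne_zero _)
    push_cast
    field_simp
  rw [Finset.sum_congr rfl hval, ← Finset.mul_sum, eval_Pplus_sum l (s:ℂ)]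

end Aux

/-- the Mellin transform of `ψ⁺_ℓ` equals `L_∞(1/2 - is) P⁺_ℓ(s)`, and `P⁺_ℓ`
is divisible by `1/4 + X²`, vanishes at `i/2`, is even, and has real coefficients. -/
theorem stmt16 (l : ℕ) (hl : 1 ≤ l) :
    (∀ s : ℝ,
        (∫ u in Set.Ioi (0 : ℝ),
            ((psiPlus l u : ℝ) : ℂ) * (u : ℂ) ^ ((1 : ℂ) / 2 - Complex.I * (s : ℂ)) / (u : ℂ))
          = (Real.pi : ℂ) ^ (-((1 : ℂ) / 2 - Complex.I * (s : ℂ)) / 2) *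
              Complex.Gamma (((1 : ℂ) / 2 - Complex.I * (s : ℂ)) / 2) *
              (Pplus l).eval (s : ℂ))
    ∧ (Polynomial.C (1 / 4 : ℂ) + Polynomial.X ^ 2) ∣ Pplus l
    ∧ (Pplus l).eval (Complex.I / 2) = 0
    ∧ (∀ z : ℂ, (Pplus l).eval (-z) = (Pplus l).eval z)
    ∧ (∀ k : ℕ, ((Pplus l).coeff k).im = 0) := by
  refine ⟨fun s => main_integral l s, Pplus_dvd l, Pplus_root l, fun z => Pplus_even l z,
    fun k => ?_⟩
  have h := Pplus_conj l
  have hc : (starRingEnd ℂ) ((Pplus l).coeff k) = (Pplus l).coeff k := by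
    conv_rhs => rw [← h]
    rw [Polynomial.coeff_map]
  exact Complex.conj_eq_iff_im.mp hc
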